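/- For every composition α of n ≥ 1, the source ribbon Schur function in noncommuting variables satisfies r_{[α]} = (−1)^{ℓ(α)} Σ_{β ≽ α} (−1)^{ℓ(β)} (1/β!) h_{[β]} in F = FreeAlgebra ℚ (Fin N), where the sum is over all coarsenings β of α. -/

import Mathlib

open scoped BigOperators Classical

noncomputable section

namespace NCSymPaper

/-- `π` is a set partition of `{0, …, n-1}` (representing `[n] = {1, …, n}`):
its blocks are nonempty and every element lies in exactly one block. -/
def IsSetPartition {n : ℕ} (π : Finset (Finset (Fin n))) : Prop :=
  (∀ B ∈ π, B.Nonempty) ∧ ∀ j : Fin n, ∃! B, B ∈ π ∧ j ∈ B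

/-- `j` and `k` lie in a common block of `π`. -/
def sameBlock {n : ℕ} (π : Finset (Finset (Fin n))) (j k : Fin n) : Prop :=
  ∃ B ∈ π, j ∈ B ∧ k ∈ B

/-- The noncommutative monomial `x_{f 1} x_{f 2} ⋯ x_{f n}` in `FreeAlgebra ℚ (Fin N)`. -/
def ncMonomial {N n : ℕ} (f : Fin n → Fin N) : FreeAlgebra ℚ (Fin N) :=
  (List.ofFn fun j => FreeAlgebra.ι ℚ (f j)).prod

/-- `η` maps every block of `π` to itself. -/
def fixesBlocks {n : ℕ} (π : Finset (Finset (Fin n))) (η : Equiv.Perm (Fin n)) : Prop :=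
  ∀ B ∈ π, ∀ j ∈ B, η j ∈ B

/-- The complete homogeneous symmetric function in noncommuting variables `h_π`. -/
def hNC (N : ℕ) {n : ℕ} (π : Finset (Finset (Fin n))) : FreeAlgebra ℚ (Fin N) :=
  ∑ η ∈ Finset.univ.filter (fixesBlocks π),
    ∑ f ∈ Finset.univ.filter (fun f : Fin n → Fin N =>
        ∀ j k : Fin n, j < k → sameBlock π j k → f j ≤ f k),
      ncMonomial fun j => f (η j)

/-- The monomial symmetric function in noncommuting variables `m_σ`. -/
def mNC (N : ℕ) {n : ℕ} (σ : Finset (Finset (Fin n))) : FreeAlgebra ℚ (Fin N) :=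
  ∑ f ∈ Finset.univ.filter (fun f : Fin n → Fin N =>
      ∀ j k : Fin n, f j = f k ↔ sameBlock σ j k),
    ncMonomial f

/-- The elementary symmetric function in noncommuting variables `e_π`. -/
def eNC (N : ℕ) {n : ℕ} (π : Finset (Finset (Fin n))) : FreeAlgebra ℚ (Fin N) :=
  ∑ f ∈ Finset.univ.filter (fun f : Fin n → Fin N =>
      ∀ j k : Fin n, j ≠ k → sameBlock π j k → f j ≠ f k),
    ncMonomial f

/-- `lam` is an integer partition (weakly decreasing list of positive integers). -/
def IsPartitionList (lam : List ℕ) : Prop :=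
  List.Pairwise (· ≥ ·) lam ∧ ∀ x ∈ lam, 0 < x

/-- The entry `β(ε)_i = λ_i − μ_{ε(i)} + ε(i) − i` (0-indexed; `μ_j = 0` beyond `ℓ(μ)`). -/
def betaInt (lam mu : List ℕ) (ε : Equiv.Perm (Fin lam.length)) (i : Fin lam.length) : ℤ :=
  (lam.get i : ℤ) - (mu.getD (ε i : ℕ) 0 : ℤ) + ((ε i : ℕ) : ℤ) - ((i : ℕ) : ℤ)

/-- The set partition of `[n]` into consecutive intervals of sizes `b 0, b 1, …`
(sizes equal to `0` contribute no block). -/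
def intervalBlocks (n : ℕ) {l : ℕ} (b : Fin l → ℕ) : Finset (Finset (Fin n)) :=
  ((Finset.univ : Finset (Fin l)).image fun i =>
      (Finset.univ : Finset (Fin n)).filter fun k : Fin n =>
        (∑ j ∈ Finset.univ.filter fun j => j < i, b j) ≤ (k : ℕ) ∧
          (k : ℕ) < (∑ j ∈ Finset.univ.filter fun j => j < i, b j) + b i).filter
    fun B => B.Nonempty

/-- The image of a set partition under a map `δ` (blockwise image). -/
def applyMap {n : ℕ} (δ : Fin n → Fin n) (π : Finset (Finset (Fin n))) :
    Finset (Finset (Fin n)) :=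
  π.image fun B => B.image δ

/-- The skew Schur function in noncommuting variables
`s_{(δ, λ/μ)} = Σ_ε sgn(ε) (1/β(ε)!) h_{δ[β(ε)]}`, the summand being `0`
whenever some entry of `β(ε)` is negative. -/
def sNC (N n : ℕ) (δ : Fin n → Fin n) (lam mu : List ℕ) : FreeAlgebra ℚ (Fin N) :=
  ∑ ε : Equiv.Perm (Fin lam.length),
    if ∀ i, 0 ≤ betaInt lam mu ε i then
      (((Equiv.Perm.sign ε : ℤ) : ℚ) *
          ∏ i, 1 / ((betaInt lam mu ε i).toNat.factorial : ℚ)) •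
        hNC N (applyMap δ (intervalBlocks n fun i => (betaInt lam mu ε i).toNat))
    else 0

/-- Analogue of `sNC` with `e`'s in place of `h`'s (used for transposed Schur functions). -/
def sNCe (N n : ℕ) (δ : Fin n → Fin n) (lam mu : List ℕ) : FreeAlgebra ℚ (Fin N) :=
  ∑ ε : Equiv.Perm (Fin lam.length),
    if ∀ i, 0 ≤ betaInt lam mu ε i then
      (((Equiv.Perm.sign ε : ℤ) : ℚ) *
          ∏ i, 1 / ((betaInt lam mu ε i).toNat.factorial : ℚ)) •
        eNC N (applyMap δ (intervalBlocks n fun i => (betaInt lam mu ε i).toNat))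
    else 0

/-- The projection `ρ` letting the variables commute. -/
def rho (N : ℕ) : FreeAlgebra ℚ (Fin N) →ₐ[ℚ] MvPolynomial (Fin N) ℚ :=
  FreeAlgebra.lift ℚ MvPolynomial.X

/-- The complete homogeneous symmetric polynomial of degree `k` in `N` commuting
variables (`1` for `k = 0`, `0` for `k < 0`). -/
def hPoly (N : ℕ) (k : ℤ) : MvPolynomial (Fin N) ℚ :=
  if 0 ≤ k then
    ∑ f ∈ Finset.univ.filter fun f : Fin k.toNat → Fin N => Monotone f,
      ∏ j, MvPolynomial.X (f j)
  else 0

/-- The skew Schur polynomial `s_{λ/μ} = det(h_{λ_i − μ_j − i + j})`. -/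
def schurPoly (N : ℕ) (lam mu : List ℕ) : MvPolynomial (Fin N) ℚ :=
  Matrix.det (Matrix.of fun i j : Fin lam.length =>
    hPoly N ((lam.get i : ℤ) - (mu.getD (j : ℕ) 0 : ℤ) - ((i : ℕ) : ℤ) + ((j : ℕ) : ℤ)))

/-- Order on blocks: weakly decreasing size, ties broken by increasing least element. -/
def blockLe {n : ℕ} (B C : Finset (Fin n)) : Bool :=
  decide (C.card < B.card ∨ (B.card = C.card ∧ B.min ≤ C.min))

/-- The blocks of `π`, listed in weakly decreasing size with ties broken by
increasing least element. -/
def sortedBlocks {n : ℕ} (π : Finset (Finset (Fin n))) : List (Finset (Fin n)) :=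
  π.toList.mergeSort blockLe

/-- The one-line notation of `δ_π`. -/
def oneLine {n : ℕ} (π : Finset (Finset (Fin n))) : List (Fin n) :=
  ((sortedBlocks π).map fun B => B.sort (· ≤ ·)).flatten

/-- The permutation `δ_π` (as a function). -/
def deltaPi {n : ℕ} (π : Finset (Finset (Fin n))) : Fin n → Fin n :=
  fun i => (oneLine π).getD (i : ℕ) i

/-- `λ(π)`: the weakly decreasing list of block sizes of `π`. -/
def lamOf {n : ℕ} (π : Finset (Finset (Fin n))) : List ℕ :=
  (sortedBlocks π).map Finset.card

/-- The standard Schur function in noncommuting variables `s_π = s_{(δ_π, λ(π))}`. -/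
def sPi (N : ℕ) {n : ℕ} (π : Finset (Finset (Fin n))) : FreeAlgebra ℚ (Fin N) :=
  sNC N n (deltaPi π) (lamOf π) []

/-- The transposed standard Schur function in noncommuting variables `s^t_π`. -/
def sPiT (N : ℕ) {n : ℕ} (π : Finset (Finset (Fin n))) : FreeAlgebra ℚ (Fin N) :=
  sNCe N n (deltaPi π) (lamOf π) []

/-- The transpose of an integer partition: `(λ^t)_i = #{j : λ_j ≥ i}`. -/
def transposeList (lam : List ℕ) : List ℕ :=
  (List.range (lam.foldr max 0)).map fun i => (lam.filter fun x => i + 1 ≤ x).length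

/-- The weakly decreasing list of parts of a `Nat.Partition`. -/
def nuList {n : ℕ} (ν : Nat.Partition n) : List ℕ :=
  (Multiset.sort ν.parts (· ≤ ·)).reverse

/-- The cells of the skew diagram `λ/μ` in reading order (0-indexed pairs (row, column)). -/
def cellL (lam mu : List ℕ) : List (ℕ × ℕ) :=
  (List.range lam.length).flatMap fun i =>
    ((List.range (lam.getD i 0)).drop (mu.getD i 0)).map fun j => (i, j)

/-- The `a`-th cell of `λ/μ` in reading order. -/
def cellOf (lam mu : List ℕ) (a : ℕ) : ℕ × ℕ :=
  (cellL lam mu).getD a (0, 0)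

/-- `T` (a filling of the cells of `λ/μ`, listed in reading order) is a semistandard
Young tableau: rows weakly increase left to right, columns strictly increase
top to bottom. -/
def IsSSYT {N n : ℕ} (lam mu : List ℕ) (T : Fin n → Fin N) : Prop :=
  ∀ a b : Fin n,
    ((cellOf lam mu a).1 = (cellOf lam mu b).1 ∧
        (cellOf lam mu b).2 = (cellOf lam mu a).2 + 1 → T a ≤ T b) ∧
    ((cellOf lam mu b).1 = (cellOf lam mu a).1 + 1 ∧
        (cellOf lam mu b).2 = (cellOf lam mu a).2 → T a < T b)

/-- The Rosas–Sagan skew Schur function `S_{λ/μ}`. -/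
def RSschur (N n : ℕ) (lam mu : List ℕ) : FreeAlgebra ℚ (Fin N) :=
  ∑ δ : Equiv.Perm (Fin n),
    ∑ T ∈ Finset.univ.filter fun T : Fin n → Fin N => IsSSYT lam mu T,
      ncMonomial fun k => T (δ k)

/-- The Kostka number `K_ν^{λ/μ}`: the number of semistandard Young tableaux of shape
`λ/μ` in which the entry `i` occurs exactly `ν_i` times (all entries of such a
tableau necessarily lie in `{1, …, n}` where `n = |λ/μ|`). -/
def kostka (n : ℕ) (lam mu nu : List ℕ) : ℕ :=
  (Finset.univ.filter fun T : Fin n → Fin n =>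
      IsSSYT lam mu T ∧
        ∀ i : Fin n, (Finset.univ.filter fun a : Fin n => T a = i).card = nu.getD (i : ℕ) 0).card

/-- The outer shape of the ribbon diagram of a composition `α`:
`λ_k = α_k` and `λ_i = α_i + λ_{i+1} − 1`. -/
def ribbonOuter : List ℕ → List ℕ
  | [] => []
  | a :: rest =>
    match ribbonOuter rest with
    | [] => [a]
    | b :: t => (a + b - 1) :: b :: t

/-- The inner shape of the ribbon diagram of `α`: `μ_i = λ_{i+1} − 1`, `μ_k = 0`. -/
def ribbonInner (α : List ℕ) : List ℕ :=
  (ribbonOuter α).tail.map (· - 1)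

/-- The source ribbon Schur function in noncommuting variables `r_{[α]}`. -/
def ribbonNC (N n : ℕ) (α : List ℕ) : FreeAlgebra ℚ (Fin N) :=
  sNC N n id (ribbonOuter α) (ribbonInner α)

/-- All coarsenings of a composition. -/
def coarsenList : List ℕ → List (List ℕ)
  | [] => [[]]
  | a :: rest =>
    (coarsenList rest).flatMap fun β =>
      match β with
      | [] => [[a]]
      | b :: t => [a :: b :: t, (a + b) :: t]

/-- The set partition `[β]` of `[n]` into consecutive intervals of sizes given by `β`. -/
def intervalBlocksL (n : ℕ) (β : List ℕ) : Finset (Finset (Fin n)) :=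
  intervalBlocks n fun i : Fin β.length => β.get i


/-! ### Auxiliary development for Statement 18 -/

section Aux

/-- Hessenberg condition on a permutation. -/
def Pcond {k : ℕ} (σ : Equiv.Perm (Fin k)) : Prop :=
  ∀ i : Fin k, (i : ℕ) ≤ (σ i : ℕ) + 1

/-- getD-level version of `betaInt` for the ribbon shape of `α`. -/
def btZ (α : List ℕ) {k : ℕ} (σ : Equiv.Perm (Fin k)) (i : Fin k) : ℤ :=
  ((ribbonOuter α).getD (i : ℕ) 0 : ℤ) - ((ribbonInner α).getD ((σ i : ℕ)) 0 : ℤ)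
    + ((σ i : ℕ) : ℤ) - ((i : ℕ) : ℤ)

/-- The list of nonzero entries of `β(σ)`. -/
def nzl (α : List ℕ) {k : ℕ} (σ : Equiv.Perm (Fin k)) : List ℕ :=
  (List.ofFn fun i => (btZ α σ i).toNat).filter (· ≠ 0)

/-- Merge a part into the first part of a composition. -/
def mrg (a : ℕ) : List ℕ → List ℕ
  | [] => [a]
  | b :: t => (a + b) :: t

lemma ribbonOuter_cons (a : ℕ) (rest : List ℕ) :
    ribbonOuter (a :: rest) = (a + (ribbonOuter rest).headD 1 - 1) :: ribbonOuter rest := by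
  cases h : ribbonOuter rest with
  | nil => simp [ribbonOuter, h]
  | cons b t => simp [ribbonOuter, h]

lemma ribbonOuter_length (α : List ℕ) : (ribbonOuter α).length = α.length := by
  induction α with
  | nil => rfl
  | cons a rest ih => rw [ribbonOuter_cons]; simp [ih]

lemma ribbonOuter_pos {α : List ℕ} (hpos : ∀ x ∈ α, 0 < x) :
    ∀ x ∈ ribbonOuter α, 1 ≤ x := by
  induction α with
  | nil => simp [ribbonOuter]
  | cons a rest ih =>
    rw [ribbonOuter_cons]
    intro x hx
    have ha : 0 < a := hpos a (by simp)
    rcases List.mem_cons.1 hx with h | h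
    · subst h
      cases hro : ribbonOuter rest with
      | nil => simp [hro]; omega
      | cons b t =>
        have hb : 1 ≤ b := ih (fun y hy => hpos y (List.mem_cons_of_mem _ hy)) b (by simp [hro])
        simp [hro]; omega
    · exact ih (fun y hy => hpos y (List.mem_cons_of_mem _ hy)) x h

lemma ribbonOuter_sorted {α : List ℕ} (hpos : ∀ x ∈ α, 0 < x) :
    List.Pairwise (· ≥ ·) (ribbonOuter α) := by
  induction α with
  | nil => simp [ribbonOuter]
  | cons a rest ih =>
    rw [ribbonOuter_cons]
    have ha : 0 < a := hpos a (by simp)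
    have ih' := ih (fun y hy => hpos y (List.mem_cons_of_mem _ hy))
    refine List.pairwise_cons.2 ⟨?_, ih'⟩
    intro y hy
    cases hro : ribbonOuter rest with
    | nil => simp [hro] at hy
    | cons b t =>
      rw [hro] at hy ih'
      have hyb : y ≤ b := by
        rcases List.mem_cons.1 hy with h | h
        · omega
        · exact List.rel_of_pairwise_cons ih' h
      simp [hro]; omega

lemma ribbonOuter_anti {α : List ℕ} (hpos : ∀ x ∈ α, 0 < x) {i j : ℕ} (hij : i ≤ j) :
    (ribbonOuter α).getD j 0 ≤ (ribbonOuter α).getD i 0 := by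
  by_cases hj : j < (ribbonOuter α).length
  · have hi : i < (ribbonOuter α).length := lt_of_le_of_lt hij hj
    rw [List.getD_eq_getElem _ _ hj, List.getD_eq_getElem _ _ hi]
    rcases eq_or_lt_of_le hij with rfl | hlt
    · exact le_refl _
    · exact (ribbonOuter_sorted hpos).rel_get_of_lt (a := ⟨i, hi⟩) (b := ⟨j, hj⟩) hlt
  · rw [List.getD_eq_default _ _ (le_of_not_gt hj)]
    exact Nat.zero_le _

lemma map_sub_one_getD (l : List ℕ) (j : ℕ) :
    (l.map (· - 1)).getD j 0 = l.getD j 0 - 1 := by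
  by_cases hj : j < l.length
  · rw [List.getD_eq_getElem _ _ (by simpa using hj), List.getD_eq_getElem _ _ hj,
      List.getElem_map]
  · rw [List.getD_eq_default _ _ (by simpa using le_of_not_gt hj),
      List.getD_eq_default _ _ (le_of_not_gt hj)]

lemma ribbonInner_getD (α : List ℕ) (j : ℕ) :
    (ribbonInner α).getD j 0 = (ribbonOuter α).getD (j + 1) 0 - 1 := by
  unfold ribbonInner
  cases h : ribbonOuter α with
  | nil => simp
  | cons c t => simp only [List.tail_cons, map_sub_one_getD, List.getD_cons_succ]

lemma ribbonInner_getD_int {α : List ℕ} (hpos : ∀ x ∈ α, 0 < x) {j : ℕ}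
    (hj : j + 1 < (ribbonOuter α).length) :
    ((ribbonInner α).getD j 0 : ℤ) = ((ribbonOuter α).getD (j + 1) 0 : ℤ) - 1 := by
  have h1 : 1 ≤ (ribbonOuter α).getD (j + 1) 0 := by
    rw [List.getD_eq_getElem _ _ hj]
    exact ribbonOuter_pos hpos _ (List.getElem_mem _)
  rw [ribbonInner_getD]
  omega

lemma ribbonInner_getD_zero {α : List ℕ} {j : ℕ} (hj : (ribbonOuter α).length ≤ j + 1) :
    (ribbonInner α).getD j 0 = 0 := by
  rw [ribbonInner_getD, List.getD_eq_default _ _ hj]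

lemma btZ_pos {α : List ℕ} (hpos : ∀ x ∈ α, 0 < x) {k : ℕ} (hk : k = α.length)
    (σ : Equiv.Perm (Fin k)) (i : Fin k) (hi : (i : ℕ) ≤ (σ i : ℕ)) :
    0 < btZ α σ i := by
  have hΛ : (ribbonOuter α).length = k := (ribbonOuter_length α).trans hk.symm
  have hσi : (σ i : ℕ) < k := (σ i).isLt
  unfold btZ
  by_cases h : (σ i : ℕ) + 1 < (ribbonOuter α).length
  · rw [ribbonInner_getD_int hpos h]
    have h1 := ribbonOuter_anti hpos (i := (i : ℕ)) (j := (σ i : ℕ) + 1) (by omega)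
    omega
  · rw [ribbonInner_getD_zero (le_of_not_gt h)]
    have h1 : 1 ≤ (ribbonOuter α).getD (i : ℕ) 0 := by
      rw [List.getD_eq_getElem _ _ (by omega)]
      exact ribbonOuter_pos hpos _ (List.getElem_mem _)
    push_cast
    omega

lemma btZ_nonneg {α : List ℕ} (hpos : ∀ x ∈ α, 0 < x) {k : ℕ} (hk : k = α.length)
    {σ : Equiv.Perm (Fin k)} (hσ : Pcond σ) (i : Fin k) : 0 ≤ btZ α σ i := by
  have hΛ : (ribbonOuter α).length = k := (ribbonOuter_length α).trans hk.symm
  by_cases hi : (i : ℕ) ≤ (σ i : ℕ)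
  · exact le_of_lt (btZ_pos hpos hk σ i hi)
  · have h2 : (σ i : ℕ) + 1 = (i : ℕ) := by have := hσ i; omega
    have h : (σ i : ℕ) + 1 < (ribbonOuter α).length := by
      have := i.isLt; omega
    unfold btZ
    rw [ribbonInner_getD_int hpos h, h2]
    omega

lemma btZ_neg {α : List ℕ} (hpos : ∀ x ∈ α, 0 < x) {k : ℕ} (hk : k = α.length)
    {σ : Equiv.Perm (Fin k)} (hσ : ¬ Pcond σ) : ∃ i, btZ α σ i < 0 := by
  have hΛ : (ribbonOuter α).length = k := (ribbonOuter_length α).trans hk.symm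
  simp only [Pcond, not_forall, not_le] at hσ
  obtain ⟨i, hi⟩ := hσ
  refine ⟨i, ?_⟩
  have h : (σ i : ℕ) + 1 < (ribbonOuter α).length := by
    have := i.isLt; omega
  have h1 := ribbonOuter_anti hpos (i := (σ i : ℕ) + 1) (j := (i : ℕ)) (by omega)
  unfold btZ
  rw [ribbonInner_getD_int hpos h]
  omega


section ConsLemmas

variable {a : ℕ} {rest : List ℕ}

lemma lam_cons_succ (j : ℕ) :
    (ribbonOuter (a :: rest)).getD (j + 1) 0 = (ribbonOuter rest).getD j 0 := by
  rw [ribbonOuter_cons, List.getD_cons_succ]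

lemma inner_cons_succ (j : ℕ) :
    (ribbonInner (a :: rest)).getD (j + 1) 0 = (ribbonInner rest).getD j 0 := by
  unfold ribbonInner
  rw [ribbonOuter_cons, List.tail_cons]
  rcases hro : ribbonOuter rest with _ | ⟨c, tl⟩
  · simp
  · simp only [List.tail_cons, List.getD_cons_succ]
    rw [show (c :: tl).map (· - 1) = (c - 1) :: tl.map (· - 1) from rfl, List.getD_cons_succ]

lemma inner_cons_zero :
    (ribbonInner (a :: rest)).getD 0 0 = (ribbonOuter rest).getD 0 0 - 1 := by
  unfold ribbonInner
  rw [ribbonOuter_cons, List.tail_cons, map_sub_one_getD]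

lemma lam_cons_zero_int (hpos : ∀ x ∈ a :: rest, 0 < x) (hne : rest ≠ []) :
    ((ribbonOuter (a :: rest)).getD 0 0 : ℤ) = a + ((ribbonOuter rest).getD 0 0 : ℤ) - 1 := by
  have ha : 1 ≤ a := hpos a (by simp)
  rcases hro : ribbonOuter rest with _ | ⟨c, tl⟩
  · exact absurd (List.length_eq_zero_iff.1 (by rw [← ribbonOuter_length rest, hro]; rfl)) hne
  · have hc : 1 ≤ c := ribbonOuter_pos (fun y hy => hpos y (List.mem_cons_of_mem _ hy)) c (by simp [hro])
    rw [ribbonOuter_cons, hro]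
    simp only [List.headD_cons, List.getD_cons_zero]
    push_cast
    omega

lemma inner_cons_zero_int (hpos : ∀ x ∈ a :: rest, 0 < x) (hne : rest ≠ []) :
    ((ribbonInner (a :: rest)).getD 0 0 : ℤ) = ((ribbonOuter rest).getD 0 0 : ℤ) - 1 := by
  have h1 : 1 ≤ (ribbonOuter rest).getD 0 0 := by
    rcases hro : ribbonOuter rest with _ | ⟨c, tl⟩
    · exact absurd (List.length_eq_zero_iff.1 (by rw [← ribbonOuter_length rest, hro]; rfl)) hne
    · have hc : 1 ≤ c := ribbonOuter_pos (fun y hy => hpos y (List.mem_cons_of_mem _ hy)) c (by simp [hro])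
      simpa using hc
  rw [inner_cons_zero]
  omega

lemma btZ_p0_zero (hpos : ∀ x ∈ a :: rest, 0 < x) (e : Equiv.Perm (Fin rest.length)) :
    btZ (a :: rest) (Equiv.Perm.decomposeFin.symm (0, e)) 0 = (a : ℤ) := by
  have h0 : (Equiv.Perm.decomposeFin.symm (0, e)) 0 = 0 :=
    Equiv.Perm.decomposeFin_symm_apply_zero _ _
  unfold btZ
  rw [h0]
  by_cases hne : rest = []
  · subst hne
    norm_num [ribbonOuter, ribbonInner]
  · rw [Fin.val_zero, lam_cons_zero_int hpos hne, inner_cons_zero_int hpos hne]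
    push_cast
    ring

lemma btZ_p0_succ (e : Equiv.Perm (Fin rest.length)) (j : Fin rest.length) :
    btZ (a :: rest) (Equiv.Perm.decomposeFin.symm (0, e)) j.succ = btZ rest e j := by
  have hs : (Equiv.Perm.decomposeFin.symm (0, e)) j.succ = (e j).succ := by
    rw [Equiv.Perm.decomposeFin_symm_apply_succ, Equiv.swap_self]
    rfl
  unfold btZ
  rw [hs, Fin.val_succ, Fin.val_succ, lam_cons_succ, inner_cons_succ]
  push_cast
  ring

end ConsLemmas

section MergeLemmas

variable {a b : ℕ} {t : List ℕ}

lemma btZ_merge_zero (hpos : ∀ x ∈ a :: b :: t, 0 < x)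
    (e : Equiv.Perm (Fin (t.length + 1))) :
    btZ (a :: b :: t) (Equiv.Perm.decomposeFin.symm ((e 0).succ, e)) 0
      = (a : ℤ) + btZ (b :: t) e 0 := by
  have h0 : (Equiv.Perm.decomposeFin.symm ((e 0).succ, e)) 0 = (e 0).succ :=
    Equiv.Perm.decomposeFin_symm_apply_zero _ _
  unfold btZ
  rw [h0]
  simp only [Fin.val_zero, Fin.val_succ]
  rw [lam_cons_zero_int hpos (by simp), inner_cons_succ]
  push_cast
  ring

lemma btZ_merge_one (hpos : ∀ x ∈ a :: b :: t, 0 < x)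
    (e : Equiv.Perm (Fin (t.length + 1))) :
    btZ (a :: b :: t) (Equiv.Perm.decomposeFin.symm ((e 0).succ, e)) (Fin.succ 0) = 0 := by
  have hs : (Equiv.Perm.decomposeFin.symm ((e 0).succ, e)) (Fin.succ 0) = 0 := by
    rw [Equiv.Perm.decomposeFin_symm_apply_succ, Equiv.swap_apply_right]
  unfold btZ
  rw [hs]
  simp only [Fin.val_zero, Fin.val_succ]
  rw [show (0:ℕ) + 1 = 1 from rfl, lam_cons_succ, inner_cons_zero_int hpos (by simp)]
  push_cast
  ring

lemma btZ_merge_succ (e : Equiv.Perm (Fin (t.length + 1))) (j : Fin (t.length + 1))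
    (hj : j ≠ 0) :
    btZ (a :: b :: t) (Equiv.Perm.decomposeFin.symm ((e 0).succ, e)) j.succ
      = btZ (b :: t) e j := by
  have hne1 : (e j).succ ≠ 0 := Fin.succ_ne_zero _
  have hne2 : (e j).succ ≠ (e 0).succ := by
    intro h
    exact hj (e.injective (Fin.succ_injective _ h))
  have hs : (Equiv.Perm.decomposeFin.symm ((e 0).succ, e)) j.succ = (e j).succ := by
    rw [Equiv.Perm.decomposeFin_symm_apply_succ, Equiv.swap_apply_of_ne_of_ne hne1 hne2]
  unfold btZ
  rw [hs, Fin.val_succ, Fin.val_succ, lam_cons_succ, inner_cons_succ]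
  push_cast
  ring

lemma Pcond_decompose {m : ℕ} (e : Equiv.Perm (Fin (m + 1)))
    (p : Fin (m + 2)) :
    Pcond (Equiv.Perm.decomposeFin.symm (p, e)) ↔ Pcond e ∧ (p = 0 ∨ p = (e 0).succ) := by
  constructor
  · intro h
    have he : Pcond e := by
      intro j
      by_cases hj0 : j = 0
      · subst hj0; simp
      · have hhj := h j.succ
        rw [Equiv.Perm.decomposeFin_symm_apply_succ] at hhj
        by_cases hep : (e j).succ = p
        · rw [hep, Equiv.swap_apply_right] at hhj
          exfalso
          apply hj0
          have : (j : ℕ) = 0 := by simpa [Fin.val_succ] using hhj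
          exact Fin.ext this
        · rw [Equiv.swap_apply_of_ne_of_ne (Fin.succ_ne_zero _) hep] at hhj
          simp only [Fin.val_succ] at hhj
          omega
    refine ⟨he, ?_⟩
    by_cases hp : p = 0
    · exact Or.inl hp
    · refine Or.inr ?_
      obtain ⟨q, hq⟩ := Fin.exists_succ_eq_of_ne_zero hp
      have hj := h (e.symm q).succ
      rw [Equiv.Perm.decomposeFin_symm_apply_succ, Equiv.apply_symm_apply, hq,
        Equiv.swap_apply_right] at hj
      have h0 : e.symm q = 0 := by
        have : ((e.symm q : Fin _) : ℕ) = 0 := by simpa [Fin.val_succ] using hj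
        exact Fin.ext this
      have hq0 : q = e 0 := by rw [← h0, Equiv.apply_symm_apply]
      rw [← hq, hq0]
  · rintro ⟨he, hp | hp⟩ <;> subst hp <;> intro i <;>
      refine Fin.cases ?_ ?_ i
    · simp
    · intro j
      have hs : (Equiv.Perm.decomposeFin.symm ((0 : Fin _), e)) j.succ = (e j).succ := by
        rw [Equiv.Perm.decomposeFin_symm_apply_succ, Equiv.swap_self]
        rfl
      rw [hs]
      have := he j
      simp only [Fin.val_succ]
      omega
    · simp
    · intro j
      by_cases hj : (e j).succ = (e 0).succ
      · have hj0 : j = 0 := e.injective (Fin.succ_injective _ hj)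
        subst hj0
        have hs : (Equiv.Perm.decomposeFin.symm ((e 0).succ, e)) (Fin.succ 0) = 0 := by
          rw [Equiv.Perm.decomposeFin_symm_apply_succ, Equiv.swap_apply_right]
        rw [hs]
        simp
      · have hs : (Equiv.Perm.decomposeFin.symm ((e 0).succ, e)) j.succ = (e j).succ := by
          rw [Equiv.Perm.decomposeFin_symm_apply_succ,
            Equiv.swap_apply_of_ne_of_ne (Fin.succ_ne_zero _) hj]
        rw [hs]
        have := he j
        simp only [Fin.val_succ]
        omega

end MergeLemmas


section NzlLemmas

variable {a b : ℕ} {rest t : List ℕ}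

lemma nzl_cons_p0 (hpos : ∀ x ∈ a :: rest, 0 < x) (e : Equiv.Perm (Fin rest.length)) :
    nzl (a :: rest) (Equiv.Perm.decomposeFin.symm (0, e)) = a :: nzl rest e := by
  have ha : a ≠ 0 := by have := hpos a (by simp); omega
  have h0 : (btZ (a :: rest) (Equiv.Perm.decomposeFin.symm (0, e)) 0).toNat = a := by
    rw [btZ_p0_zero hpos]; exact Int.toNat_natCast a
  show (List.ofFn (fun i : Fin (rest.length + 1) =>
      (btZ (a :: rest) (Equiv.Perm.decomposeFin.symm (0, e)) i).toNat)).filter (· ≠ 0) = _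
  rw [List.ofFn_succ, List.filter_cons]
  simp only [h0, btZ_p0_succ]
  simp [nzl, ha]

lemma nzl_cons_p0' {a b : ℕ} {t : List ℕ} (hpos : ∀ x ∈ a :: b :: t, 0 < x)
    (e : Equiv.Perm (Fin (t.length + 1))) :
    nzl (a :: b :: t) (Equiv.Perm.decomposeFin.symm (0, e)) = a :: nzl (b :: t) e :=
  nzl_cons_p0 hpos e

lemma btZ_merge_succ_succ (hpos : ∀ x ∈ a :: b :: t, 0 < x)
    (e : Equiv.Perm (Fin (t.length + 1))) (j : Fin t.length) :
    btZ (a :: b :: t) (Equiv.Perm.decomposeFin.symm ((e 0).succ, e)) j.succ.succ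
      = btZ (b :: t) e j.succ :=
  btZ_merge_succ e j.succ (Fin.succ_ne_zero _)

lemma nzl_cons_merge (hpos : ∀ x ∈ a :: b :: t, 0 < x)
    (e : Equiv.Perm (Fin (t.length + 1))) :
    nzl (a :: b :: t) (Equiv.Perm.decomposeFin.symm ((e 0).succ, e))
      = mrg a (nzl (b :: t) e) := by
  have hposR : ∀ x ∈ b :: t, 0 < x := fun y hy => hpos y (List.mem_cons_of_mem _ hy)
  have hb0 : 0 < btZ (b :: t) e 0 := @btZ_pos (b :: t) hposR (t.length + 1) rfl e 0 (Nat.zero_le _)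
  have ha : 1 ≤ a := hpos a (by simp)
  have hR : nzl (b :: t) e = (btZ (b :: t) e 0).toNat ::
      (List.ofFn fun j : Fin t.length => (btZ (b :: t) e j.succ).toNat).filter (· ≠ 0) := by
    show (List.ofFn (fun i : Fin (t.length + 1) =>
        (btZ (b :: t) e i).toNat)).filter (· ≠ 0) = _
    rw [List.ofFn_succ, List.filter_cons]
    simp [show ¬ (btZ (b :: t) e 0).toNat = 0 by omega]
  have hL0 : (btZ (a :: b :: t) (Equiv.Perm.decomposeFin.symm ((e 0).succ, e)) 0).toNat
      = a + (btZ (b :: t) e 0).toNat := by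
    rw [btZ_merge_zero hpos]; omega
  show (List.ofFn (fun i : Fin (t.length + 1 + 1) =>
      (btZ (a :: b :: t) (Equiv.Perm.decomposeFin.symm ((e 0).succ, e)) i).toNat)).filter
        (· ≠ 0) = _
  simp only [List.ofFn_succ, List.filter_cons]
  simp only [hL0, btZ_merge_one hpos, btZ_merge_succ_succ hpos, Int.toNat_zero]
  rw [hR]
  simp [mrg, show ¬ a + (btZ (b :: t) e 0).toNat = 0 by omega, hb0]

end NzlLemmas


section Blocks

/-- Interval `[s, s+x)` inside `Fin n`. -/
def ivl (n s x : ℕ) : Finset (Fin n) :=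
  Finset.univ.filter fun k : Fin n => s ≤ (k : ℕ) ∧ (k : ℕ) < s + x

/-- Interval blocks with an offset, defined by recursion on the list of sizes. -/
def Sblocks (n : ℕ) : ℕ → List ℕ → Finset (Finset (Fin n))
  | _, [] => ∅
  | s, x :: β =>
    ({ivl n s x} : Finset (Finset (Fin n))).filter (fun B => B.Nonempty) ∪ Sblocks n (s + x) β

lemma intervalBlocks_eq_S {n : ℕ} : ∀ {l : ℕ} (b : Fin l → ℕ) (s : ℕ),
    ((Finset.univ.image fun i : Fin l =>
        ivl n (s + ∑ j ∈ Finset.univ.filter (fun j => j < i), b j) (b i)).filter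
      fun B => B.Nonempty) = Sblocks n s (List.ofFn b) := by
  intro l
  induction l with
  | zero => intro b s; simp [Sblocks]
  | succ m ih =>
    intro b s
    have hps0 : (∑ j ∈ Finset.univ.filter (fun j => j < (0 : Fin (m + 1))), b j) = 0 :=
      Finset.sum_eq_zero fun j hj => absurd (Finset.mem_filter.1 hj).2 (Fin.not_lt_zero j)
    have hps : ∀ i : Fin m, (∑ j ∈ Finset.univ.filter (fun j => j < Fin.succ i), b j)
        = b 0 + ∑ j ∈ Finset.univ.filter (fun j => j < i), b j.succ := by
      intro i
      rw [Finset.sum_filter, Finset.sum_filter, Fin.sum_univ_succ]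
      simp [Fin.succ_lt_succ_iff, Fin.succ_pos]
    rw [List.ofFn_succ]
    show _ = ({ivl n s (b 0)} : Finset (Finset (Fin n))).filter (fun B => B.Nonempty)
        ∪ Sblocks n (s + b 0) (List.ofFn fun j => b j.succ)
    rw [← ih (fun j => b j.succ) (s + b 0)]
    set F : Fin (m + 1) → Finset (Fin n) :=
      fun i => ivl n (s + ∑ j ∈ Finset.univ.filter (fun j => j < i), b j) (b i) with hF
    rw [Fin.univ_succ, Finset.cons_eq_insert, Finset.image_insert, Finset.map_eq_image,
      Finset.image_image]
    simp only [Function.comp_def, Function.Embedding.coeFn_mk]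
    have hF0 : F 0 = ivl n s (b 0) := by
      rw [hF]; dsimp only; rw [hps0, add_zero]
    have himg : (Finset.univ.image fun x : Fin m => F x.succ)
        = Finset.univ.image fun x : Fin m =>
          ivl n (s + b 0 + ∑ j' ∈ Finset.univ.filter (fun j' => j' < x), b j'.succ)
            (b x.succ) := by
      congr 1
      funext x
      rw [hF]; dsimp only; rw [hps x, ← add_assoc]
    rw [himg, hF0, Finset.filter_insert]
    by_cases h : (ivl n s (b 0)).Nonempty
    · rw [if_pos h, Finset.filter_singleton, if_pos h]
      ext B; simp [Finset.mem_insert, or_assoc]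
    · rw [if_neg h, Finset.filter_singleton, if_neg h, Finset.empty_union]

lemma Sblocks_filter (n : ℕ) : ∀ (β : List ℕ) (s : ℕ),
    Sblocks n s (β.filter (· ≠ 0)) = Sblocks n s β := by
  intro β
  induction β with
  | nil => intro s; rfl
  | cons x β ih =>
    intro s
    by_cases hx : x = 0
    · subst hx
      have hivl : ivl n s 0 = ∅ := by
        ext k; simp [ivl]
      have : (List.filter (· ≠ 0) (0 :: β)) = List.filter (· ≠ 0) β := by simp
      rw [this, ih]
      show _ = ({ivl n s 0} : Finset (Finset (Fin n))).filter (fun B => B.Nonempty)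
          ∪ Sblocks n (s + 0) β
      rw [hivl, Finset.filter_singleton, if_neg (by simp), Finset.empty_union, add_zero]
    · have : (List.filter (· ≠ 0) (x :: β)) = x :: List.filter (· ≠ 0) β := by simp [hx]
      rw [this]
      show ({ivl n s x} : Finset (Finset (Fin n))).filter (fun B => B.Nonempty)
          ∪ Sblocks n (s + x) (β.filter (· ≠ 0)) = _
      rw [ih]
      rfl

lemma intervalBlocks_eq {n l : ℕ} (b : Fin l → ℕ) :
    intervalBlocks n b = Sblocks n 0 (List.ofFn b) := by
  have h := intervalBlocks_eq_S (n := n) b 0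
  simp only [ivl, zero_add] at h
  exact h

lemma intervalBlocksL_eq (n : ℕ) (β : List ℕ) :
    intervalBlocksL n β = Sblocks n 0 β := by
  unfold intervalBlocksL
  rw [intervalBlocks_eq]
  congr 1
  exact List.ofFn_get β

lemma intervalBlocks_nzl {n : ℕ} (α : List ℕ) {k : ℕ} (σ : Equiv.Perm (Fin k)) :
    intervalBlocks n (fun i => (btZ α σ i).toNat) = intervalBlocksL n (nzl α σ) := by
  rw [intervalBlocks_eq, intervalBlocksL_eq, nzl, Sblocks_filter]

end Blocks

section ListLemmas

lemma filter_factorial_prod (l : List ℕ) :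
    (l.map fun x => 1 / (x.factorial : ℚ)).prod
      = ((l.filter (· ≠ 0)).map fun x => 1 / (x.factorial : ℚ)).prod := by
  induction l with
  | nil => rfl
  | cons x l ih =>
    by_cases hx : x = 0
    · subst hx
      simp only [List.map_cons, List.prod_cons, ih]
      simp
    · simp only [List.map_cons, List.prod_cons, ih]
      rw [show List.filter (· ≠ 0) (x :: l) = x :: l.filter (· ≠ 0) by simp [hx]]
      simp

lemma one_div_factorial_prod (l : List ℕ) :
    (l.map fun x => 1 / (x.factorial : ℚ)).prod = 1 / (((l.map Nat.factorial).prod : ℕ) : ℚ) := by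
  induction l with
  | nil => simp
  | cons x l ih =>
    simp only [List.map_cons, List.prod_cons, ih, one_div_mul_one_div]
    push_cast
    ring_nf

lemma sum_map_flatMap {A A' M : Type*} [AddCommMonoid M] (l : List A) (g : A → List A')
    (f : A' → M) :
    ((l.flatMap g).map f).sum = (l.map fun x => ((g x).map f).sum).sum := by
  induction l with
  | nil => rfl
  | cons x l ih => simp [List.flatMap_cons, ih]

lemma coarsen_ne_nil {a : ℕ} {r : List ℕ} {β : List ℕ} (h : β ∈ coarsenList (a :: r)) :
    β ≠ [] := by
  unfold coarsenList at h
  rw [List.mem_flatMap] at h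
  obtain ⟨γ, _, hm⟩ := h
  rcases γ with _ | ⟨c, tl⟩
  · simp only [List.mem_singleton] at hm
    subst hm; simp
  · simp only [List.mem_cons, List.mem_singleton, List.not_mem_nil, or_false] at hm
    rcases hm with rfl | rfl <;> simp

end ListLemmas


section MainSum

lemma mrg_length {a : ℕ} {β : List ℕ} (h : β ≠ []) : (mrg a β).length = β.length := by
  rcases β with _ | ⟨c, tl⟩
  · exact absurd rfl h
  · rfl

lemma main_sum {M : Type*} [AddCommMonoid M] [Module ℚ M] (α : List ℕ)
    (hpos : ∀ x ∈ α, 0 < x) (G : List ℕ → M) :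
    (∑ σ ∈ Finset.univ.filter (fun σ : Equiv.Perm (Fin α.length) => Pcond σ),
        ((Equiv.Perm.sign σ : ℤ) : ℚ) • G (nzl α σ))
      = ((coarsenList α).map fun β =>
          ((-1 : ℚ) ^ α.length * (-1 : ℚ) ^ β.length) • G β).sum := by
  induction α generalizing G with
  | nil =>
    have huniv : (Finset.univ : Finset (Equiv.Perm (Fin ([] : List ℕ).length))) = {1} :=
      Finset.eq_singleton_iff_unique_mem.2
        ⟨Finset.mem_univ _, fun σ _ => Equiv.ext fun i => (Nat.not_lt_zero _ i.isLt).elim⟩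
    have hpc : ∀ σ ∈ (Finset.univ : Finset (Equiv.Perm (Fin ([] : List ℕ).length))),
        Pcond σ := fun σ _ i => (Nat.not_lt_zero _ i.isLt).elim
    rw [Finset.filter_true_of_mem hpc, huniv, Finset.sum_singleton]
    have hnz : nzl ([] : List ℕ) (1 : Equiv.Perm (Fin ([] : List ℕ).length)) = [] := by
      have h1 : (List.ofFn fun i : Fin ([] : List ℕ).length => (btZ [] 1 i).toNat) = [] := by
        apply List.eq_nil_of_length_eq_zero
        simp
      unfold nzl
      rw [h1]
      rfl
    rw [hnz]
    simp [coarsenList]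
  | cons a rest ih =>
    have hposR : ∀ x ∈ rest, 0 < x := fun y hy => hpos y (List.mem_cons_of_mem _ hy)
    have ha0 : a ≠ 0 := by have := hpos a (by simp); omega
    rcases rest with _ | ⟨b, t⟩
    · -- α = [a]
      have hpc : ∀ σ ∈ (Finset.univ : Finset (Equiv.Perm (Fin ([a] : List ℕ).length))),
          Pcond σ := by
        intro σ _ i
        have h1 : (i : ℕ) < 1 := i.isLt
        omega
      have huniv : (Finset.univ : Finset (Equiv.Perm (Fin ([a] : List ℕ).length))) = {1} :=
        Finset.eq_singleton_iff_unique_mem.2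
          ⟨Finset.mem_univ _, fun σ _ => Equiv.ext fun i => by
            have h1 : ((σ i : Fin ([a] : List ℕ).length) : ℕ) < 1 := (σ i).isLt
            have h2 : (i : ℕ) < 1 := i.isLt
            exact Fin.ext (by simp only [Equiv.Perm.one_apply]; omega)⟩
      rw [Finset.filter_true_of_mem hpc, huniv, Finset.sum_singleton]
      have hb : btZ [a] (1 : Equiv.Perm (Fin ([a] : List ℕ).length)) (0 : Fin 1) = (a : ℤ) := by
        unfold btZ
        norm_num [ribbonOuter, ribbonInner]
      have hnz : nzl [a] (1 : Equiv.Perm (Fin ([a] : List ℕ).length)) = [a] := by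
        show (List.ofFn (fun i : Fin 1 =>
            (btZ [a] (1 : Equiv.Perm (Fin ([a] : List ℕ).length)) i).toNat)).filter (· ≠ 0) = [a]
        rw [List.ofFn_succ]
        simp [hb, ha0]
      rw [hnz]
      have hco : coarsenList [a] = [[a]] := rfl
      rw [hco]
      simp
    · -- α = a :: b :: t
      set v : Equiv.Perm (Fin (t.length + 2)) → M :=
        fun σ => ((Equiv.Perm.sign σ : ℤ) : ℚ) • G (nzl (a :: b :: t) σ) with hv
      have step1 : (∑ σ ∈ Finset.univ.filter
            (fun σ : Equiv.Perm (Fin (a :: b :: t).length) => Pcond σ),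
            ((Equiv.Perm.sign σ : ℤ) : ℚ) • G (nzl (a :: b :: t) σ))
          = ∑ e : Equiv.Perm (Fin (t.length + 1)), ∑ p : Fin (t.length + 2),
              if Pcond (Equiv.Perm.decomposeFin.symm (p, e)) then
                v (Equiv.Perm.decomposeFin.symm (p, e)) else 0 := by
        rw [Finset.sum_filter]
        exact ((Equiv.sum_comp (Equiv.Perm.decomposeFin.symm :
            (Fin (t.length + 2) × Equiv.Perm (Fin (t.length + 1))) ≃ _)
            (fun σ => if Pcond σ then v σ else 0)).symm).trans
          (by rw [Fintype.sum_prod_type, Finset.sum_comm])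
      rw [step1]
      have step2 : ∀ e : Equiv.Perm (Fin (t.length + 1)),
          (∑ p : Fin (t.length + 2),
            if Pcond (Equiv.Perm.decomposeFin.symm (p, e)) then
              v (Equiv.Perm.decomposeFin.symm (p, e)) else 0)
          = if Pcond e then ((Equiv.Perm.sign e : ℤ) : ℚ) •
              (G (a :: nzl (b :: t) e) + (-1 : ℚ) • G (mrg a (nzl (b :: t) e))) else 0 := by
        intro e
        by_cases he : Pcond e
        · rw [if_pos he]
          have hsplit : ∀ p : Fin (t.length + 2),
              (if Pcond (Equiv.Perm.decomposeFin.symm (p, e)) then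
                v (Equiv.Perm.decomposeFin.symm (p, e)) else 0)
              = (if p = 0 then v (Equiv.Perm.decomposeFin.symm (0, e)) else 0)
                + (if p = (e 0).succ then
                    v (Equiv.Perm.decomposeFin.symm ((e 0).succ, e)) else 0) := by
            intro p
            by_cases h0 : p = 0
            · subst h0
              rw [if_pos (by rw [Pcond_decompose]; exact ⟨he, Or.inl rfl⟩),
                if_pos rfl, if_neg (Ne.symm (Fin.succ_ne_zero _)), add_zero]
            · by_cases h1 : p = (e 0).succ
              · subst h1
                rw [if_pos (by rw [Pcond_decompose]; exact ⟨he, Or.inr rfl⟩),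
                  if_neg h0, if_pos rfl, zero_add]
              · rw [if_neg (by rw [Pcond_decompose]; tauto), if_neg h0, if_neg h1, add_zero]
          rw [Finset.sum_congr rfl (fun p _ => hsplit p), Finset.sum_add_distrib,
            Fintype.sum_ite_eq', Fintype.sum_ite_eq']
          have hs0 : v (Equiv.Perm.decomposeFin.symm (0, e))
              = ((Equiv.Perm.sign e : ℤ) : ℚ) • G (a :: nzl (b :: t) e) := by
            rw [hv]
            dsimp only
            rw [Equiv.Perm.decomposeFin.symm_sign, if_pos rfl, one_mul,
              nzl_cons_p0' hpos e]
          have hs1 : v (Equiv.Perm.decomposeFin.symm ((e 0).succ, e))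
              = (-((Equiv.Perm.sign e : ℤ) : ℚ)) • G (mrg a (nzl (b :: t) e)) := by
            rw [hv]
            dsimp only
            rw [Equiv.Perm.decomposeFin.symm_sign, if_neg (Fin.succ_ne_zero _),
              nzl_cons_merge hpos e]
            norm_num
          rw [hs0, hs1, smul_add, smul_smul]
          norm_num
        · rw [if_neg he]
          apply Finset.sum_eq_zero
          intro p _
          rw [if_neg]
          rw [Pcond_decompose]
          tauto
      rw [Finset.sum_congr rfl (fun e _ => step2 e), ← Finset.sum_filter]
      refine Eq.trans (show _ = ((coarsenList (b :: t)).map fun β =>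
          ((-1 : ℚ) ^ (b :: t : List ℕ).length * (-1 : ℚ) ^ β.length) •
            (G (a :: β) + (-1 : ℚ) • G (mrg a β))).sum
        from ih hposR (fun β => G (a :: β) + (-1 : ℚ) • G (mrg a β))) ?_
      have hflat : coarsenList (a :: b :: t) = (coarsenList (b :: t)).flatMap fun β =>
          match β with
          | [] => [[a]]
          | c :: tl => [a :: c :: tl, (a + c) :: tl] := rfl
      rw [hflat, sum_map_flatMap]
      congr 1
      apply List.map_congr_left
      intro β hβ
      have hβne : β ≠ [] := coarsen_ne_nil hβ
      rcases β with _ | ⟨c, tl⟩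
      · exact absurd rfl hβne
      · show ((-1 : ℚ) ^ (b :: t : List ℕ).length * (-1 : ℚ) ^ (c :: tl : List ℕ).length) •
            (G (a :: c :: tl) + (-1 : ℚ) • G (mrg a (c :: tl)))
          = (([a :: c :: tl, (a + c) :: tl]).map fun β' =>
              ((-1 : ℚ) ^ (a :: b :: t : List ℕ).length * (-1 : ℚ) ^ β'.length) • G β').sum
        rw [smul_add, smul_smul]
        simp only [List.map_cons, List.map_nil, List.sum_cons, List.sum_nil, add_zero]
        congr 1
        · congr 1
          simp only [List.length_cons]
          ring
        · show ((-1 : ℚ) ^ (b :: t : List ℕ).length * (-1 : ℚ) ^ (c :: tl : List ℕ).length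
              * (-1 : ℚ)) • G ((a + c) :: tl)
            = ((-1 : ℚ) ^ (a :: b :: t : List ℕ).length *
                (-1 : ℚ) ^ ((a + c) :: tl : List ℕ).length) • G ((a + c) :: tl)
          congr 1
          simp only [List.length_cons]
          ring

end MainSum


section Assembly

lemma applyMap_id {n : ℕ} (π : Finset (Finset (Fin n))) : applyMap id π = π := by
  unfold applyMap
  have h : ∀ B : Finset (Fin n), B.image id = B := fun B => Finset.image_id
  simp only [h]
  exact Finset.image_id

lemma nzl_permCongr (α : List ℕ) {k k' : ℕ} (h : k = k') (ε : Equiv.Perm (Fin k)) :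
    nzl α ((finCongr h).permCongr ε) = nzl α ε := by
  subst h
  have h2 : (finCongr (rfl : k = k)).permCongr ε = ε := by
    ext x
    simp [Equiv.permCongr_apply]
  rw [h2]

end Assembly

end Aux

/-- `r_{[α]} = (−1)^{ℓ(α)} Σ_{β ≽ α} (−1)^{ℓ(β)} (1/β!) h_{[β]}`,
summed over all coarsenings `β` of `α`. -/
theorem ribbon_h_expansion (N n : ℕ) (hN : 0 < N) (α : List ℕ)
    (hα : ∀ x ∈ α, 0 < x) (hsum : α.sum = n) (hn : 1 ≤ n) :
    ribbonNC N n α =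
      ((-1 : ℚ) ^ α.length) •
        ((coarsenList α).map fun β =>
            ((-1 : ℚ) ^ β.length * (1 / (((β.map Nat.factorial).prod : ℕ) : ℚ))) •
              hNC N (intervalBlocksL n β)).sum := by
  have hlen : (ribbonOuter α).length = α.length := ribbonOuter_length α
  have hbeta : ∀ (ε : Equiv.Perm (Fin (ribbonOuter α).length))
      (i : Fin (ribbonOuter α).length),
      betaInt (ribbonOuter α) (ribbonInner α) ε i = btZ α ε i := by
    intro ε i
    unfold betaInt btZ
    rw [List.getD_eq_getElem (ribbonOuter α) 0 i.isLt]
    rfl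
  set G : List ℕ → FreeAlgebra ℚ (Fin N) := fun β =>
    (1 / ((((β.map Nat.factorial).prod : ℕ) : ℚ))) • hNC N (intervalBlocksL n β) with hG
  unfold ribbonNC sNC
  have hA : ∀ ε : Equiv.Perm (Fin (ribbonOuter α).length),
      (if ∀ i, 0 ≤ betaInt (ribbonOuter α) (ribbonInner α) ε i then
        (((Equiv.Perm.sign ε : ℤ) : ℚ) *
            ∏ i, 1 / ((betaInt (ribbonOuter α) (ribbonInner α) ε i).toNat.factorial : ℚ))
          • hNC N (applyMap id (intervalBlocks n fun i =>
              (betaInt (ribbonOuter α) (ribbonInner α) ε i).toNat))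
      else 0)
      = if Pcond ε then ((Equiv.Perm.sign ε : ℤ) : ℚ) • G (nzl α ε) else 0 := by
    intro ε
    have hcond : (∀ i, 0 ≤ betaInt (ribbonOuter α) (ribbonInner α) ε i) ↔ Pcond ε := by
      constructor
      · intro h
        by_contra hP
        obtain ⟨i, hi⟩ := btZ_neg hα hlen (σ := ε) hP
        have h2 := h i
        rw [hbeta] at h2
        omega
      · intro hP i
        rw [hbeta ε i]
        exact btZ_nonneg hα hlen hP i
    by_cases hP : Pcond ε
    · rw [if_pos (hcond.2 hP), if_pos hP]
      have hprod : (∏ i, 1 / ((betaInt (ribbonOuter α) (ribbonInner α) ε i).toNat.factorial : ℚ))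
          = 1 / ((((nzl α ε).map Nat.factorial).prod : ℕ) : ℚ) := by
        calc (∏ i, 1 / ((betaInt (ribbonOuter α) (ribbonInner α) ε i).toNat.factorial : ℚ))
            = (List.ofFn fun i => 1 / (((btZ α ε i).toNat.factorial : ℚ))).prod := by
              rw [List.prod_ofFn]
              exact Finset.prod_congr rfl (fun i _ => by rw [hbeta])
          _ = ((List.ofFn fun i => (btZ α ε i).toNat).map fun x => 1 / ((x.factorial : ℚ))).prod := by
              rw [List.map_ofFn]
              rfl
          _ = (((List.ofFn fun i => (btZ α ε i).toNat).filter (· ≠ 0)).map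
                fun x => 1 / ((x.factorial : ℚ))).prod := filter_factorial_prod _
          _ = 1 / ((((nzl α ε).map Nat.factorial).prod : ℕ) : ℚ) := by
              rw [show ((List.ofFn fun i => (btZ α ε i).toNat).filter (· ≠ 0)) = nzl α ε
                from rfl, one_div_factorial_prod]
      have hblocks : applyMap id (intervalBlocks n fun i =>
            (betaInt (ribbonOuter α) (ribbonInner α) ε i).toNat)
          = intervalBlocksL n (nzl α ε) := by
        rw [applyMap_id]
        rw [show (fun i => (betaInt (ribbonOuter α) (ribbonInner α) ε i).toNat)
          = fun i => (btZ α ε i).toNat from funext fun i => by rw [hbeta]]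
        exact intervalBlocks_nzl α ε
      rw [hprod, hblocks, mul_smul]
    · rw [if_neg (fun h => hP (hcond.1 h)), if_neg hP]
  rw [Finset.sum_congr rfl (fun ε _ => hA ε), ← Finset.sum_filter]
  have hPiff : ∀ ε : Equiv.Perm (Fin (ribbonOuter α).length),
      Pcond ε ↔ Pcond ((finCongr hlen).permCongr ε) := by
    intro ε
    constructor
    · intro h j
      have h1 : ((finCongr hlen).permCongr ε) j = finCongr hlen (ε (finCongr hlen.symm j)) := by
        simp [Equiv.permCongr_apply]
      rw [h1]
      have h2 := h (finCongr hlen.symm j)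
      simpa using h2
    · intro h j
      have h2 := h (finCongr hlen j)
      simp [Equiv.permCongr_apply] at h2
      simpa using h2
  have htrans : (∑ ε ∈ Finset.univ.filter
        (fun ε : Equiv.Perm (Fin (ribbonOuter α).length) => Pcond ε),
        ((Equiv.Perm.sign ε : ℤ) : ℚ) • G (nzl α ε))
      = ∑ σ ∈ Finset.univ.filter (fun σ : Equiv.Perm (Fin α.length) => Pcond σ),
        ((Equiv.Perm.sign σ : ℤ) : ℚ) • G (nzl α σ) := by
    refine Finset.sum_equiv ((finCongr hlen).permCongr) (fun ε => ?_) (fun ε _ => ?_)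
    · simp only [Finset.mem_filter, Finset.mem_univ, true_and]
      exact hPiff ε
    · rw [Equiv.Perm.sign_permCongr, nzl_permCongr]
  rw [htrans, main_sum α hα G]
  rw [List.smul_sum, List.map_map]
  apply congrArg List.sum
  apply List.map_congr_left
  intro β _
  show ((-1 : ℚ) ^ α.length * (-1 : ℚ) ^ β.length) • G β
    = (-1 : ℚ) ^ α.length • (((-1 : ℚ) ^ β.length *
        (1 / (((β.map Nat.factorial).prod : ℕ) : ℚ))) • hNC N (intervalBlocksL n β))
  rw [hG]
  dsimp only
  rw [smul_smul, smul_smul, ← mul_assoc]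

end NCSymPaper
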